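/- Proportional Approval Voting is not strategyproof: for candidate set C = {a,b,c,d}, committee size k = 3, and n = 5 voters, in the profile P = ({a,b,c},{a,b,c},{a,b,c},{a,b,d},{a,b,d}) the unique PAV-score-maximizing committee is {a,b,c}, while in the 5-variant profile P' obtained by replacing voter 5's ballot {a,b,d} with {d} the unique PAV-score-maximizing committee is {a,b,d}; hence voter 5, by reporting the proper subset {d} of her truthful ballot, changes the PAV outcome from one containing two of her approved candidates to one containing all three, i.e., PAV(P') ∩ P(5) ⊋ PAV(P) ∩ P(5). -/

import Mathlib

open scoped Classical

/-!
Common framework: candidates are `Fin m`, voters are `Fin n`, committee size `k`.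
An approval ballot is a nonempty proper subset of the candidate set.
"at least n/k voters" is encoded as `n ≤ k * (number of such voters)`,
and "strictly more than n/(k+1) voters" as `n < (k+1) * (number of such voters)`.
-/

/-- A valid approval ballot: a nonempty proper subset of the candidate set. -/
def ValidBallot (m : ℕ) (A : Finset (Fin m)) : Prop :=
  A.Nonempty ∧ A ≠ Finset.univ

/-- A valid profile: every voter submits a valid ballot, and the ballots jointly
approve at least `k` candidates (so the committee can be filled with approved candidates). -/
def ValidProfile (m n k : ℕ) (P : Fin n → Finset (Fin m)) : Prop :=
  (∀ i, ValidBallot m (P i)) ∧ k ≤ (Finset.univ.biUnion P).card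

/-- `f` is an (approval-based) committee rule: on every valid profile it returns a
committee of cardinality `k`. -/
def IsCommitteeRule (m n k : ℕ) (f : (Fin n → Finset (Fin m)) → Finset (Fin m)) : Prop :=
  ∀ P, ValidProfile m n k P → (f P).card = k

/-- `P'` is an `i`-variant of `P`: they agree on all voters other than `i`. -/
def IVariant {m n : ℕ} (P P' : Fin n → Finset (Fin m)) (i : Fin n) : Prop :=
  ∀ j, j ≠ i → P' j = P j

/-- Strategyproofness: a voter reporting a proper subset of her truthful ballot never
obtains a committee whose intersection with her truthful ballot strictly grows. -/
def Strategyproof (m n k : ℕ) (f : (Fin n → Finset (Fin m)) → Finset (Fin m)) : Prop :=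
  ∀ P P' (i : Fin n), ValidProfile m n k P → ValidProfile m n k P' →
    IVariant P P' i → P' i ⊂ P i → ¬ (f P ∩ P i ⊂ f P' ∩ P i)

/-- Superset-strategyproofness: no i-variant (with arbitrary new ballot) yields a
committee whose intersection with the truthful ballot strictly grows. -/
def SupersetStrategyproof (m n k : ℕ) (f : (Fin n → Finset (Fin m)) → Finset (Fin m)) : Prop :=
  ∀ P P' (i : Fin n), ValidProfile m n k P → ValidProfile m n k P' →
    IVariant P P' i → ¬ (f P ∩ P i ⊂ f P' ∩ P i)

/-- Cardinality-strategyproofness: no i-variant yields a committee containing strictly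
more of the truthfully approved candidates. -/
def CardinalityStrategyproof (m n k : ℕ) (f : (Fin n → Finset (Fin m)) → Finset (Fin m)) : Prop :=
  ∀ P P' (i : Fin n), ValidProfile m n k P → ValidProfile m n k P' →
    IVariant P P' i → ¬ ((f P ∩ P i).card < (f P' ∩ P i).card)

/-- Hamming-strategyproofness: no i-variant yields a committee at strictly smaller
Hamming distance (cardinality of the symmetric difference) from the truthful ballot. -/
def HammingStrategyproof (m n k : ℕ) (f : (Fin n → Finset (Fin m)) → Finset (Fin m)) : Prop :=
  ∀ P P' (i : Fin n), ValidProfile m n k P → ValidProfile m n k P' →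
    IVariant P P' i → ¬ ((symmDiff (f P') (P i)).card < (symmDiff (f P) (P i)).card)

/-- A party-list profile: any two ballots are either equal or disjoint. -/
def PartyList {m n : ℕ} (P : Fin n → Finset (Fin m)) : Prop :=
  ∀ i j, P i = P j ∨ Disjoint (P i) (P j)

/-- Proportionality: in a party-list profile where some singleton ballot `{c}` is
submitted by at least `n/k` voters, `c` is elected. -/
def Proportional (m n k : ℕ) (f : (Fin n → Finset (Fin m)) → Finset (Fin m)) : Prop :=
  ∀ P, ValidProfile m n k P → PartyList P →
    ∀ c : Fin m, n ≤ k * (Finset.univ.filter (fun i => P i = {c})).card → c ∈ f P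

/-- Droop proportionality: in ANY profile where some singleton ballot `{c}` is submitted
by strictly more than `n/(k+1)` voters, `c` is elected. -/
def DroopProportional (m n k : ℕ) (f : (Fin n → Finset (Fin m)) → Finset (Fin m)) : Prop :=
  ∀ P, ValidProfile m n k P →
    ∀ c : Fin m, n < (k + 1) * (Finset.univ.filter (fun i => P i = {c})).card → c ∈ f P

/-- Justified representation on party lists: in a party-list profile where some ballot `A`
is submitted by at least `n/k` voters, the committee intersects `A`. -/
def JROnPartyLists (m n k : ℕ) (f : (Fin n → Finset (Fin m)) → Finset (Fin m)) : Prop :=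
  ∀ P, ValidProfile m n k P → PartyList P →
    ∀ A : Finset (Fin m), n ≤ k * (Finset.univ.filter (fun i => P i = A)).card →
      (f P ∩ A).Nonempty

/-- Justified representation: every group of at least `n/k` voters that jointly approve
some common candidate is represented by at least one committee member approved by a
group member. -/
def JR (m n k : ℕ) (f : (Fin n → Finset (Fin m)) → Finset (Fin m)) : Prop :=
  ∀ P, ValidProfile m n k P → ∀ N' : Finset (Fin n),
    n ≤ k * N'.card → (∃ c : Fin m, ∀ i ∈ N', c ∈ P i) →
    (f P ∩ N'.biUnion P).Nonempty

/-- Disjoint diversity: in a party-list profile with at most `k` distinct parties,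
the committee contains a member of each party. -/
def DisjointDiversity (m n k : ℕ) (f : (Fin n → Finset (Fin m)) → Finset (Fin m)) : Prop :=
  ∀ P, ValidProfile m n k P → PartyList P →
    (Finset.univ.image P).card ≤ k → ∀ i : Fin n, (f P ∩ P i).Nonempty

/-- Weak efficiency: a candidate approved by no voter is never elected
(on profiles where the committee can be filled with approved candidates). -/
def WeakEfficiency (m n k : ℕ) (f : (Fin n → Finset (Fin m)) → Finset (Fin m)) : Prop :=
  ∀ P, ValidProfile m n k P → ∀ c : Fin m, (∀ i, c ∉ P i) → c ∉ f P

/-- The approval score of candidate `c`: the number of voters approving `c`. -/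
def avScore (m n : ℕ) (P : Fin n → Finset (Fin m)) (c : Fin m) : ℕ :=
  (Finset.univ.filter (fun i => c ∈ P i)).card

/-- `W` is the committee selected by Approval Voting with lexicographic tie-breaking:
it has size `k`, and every member beats every non-member, either by a strictly higher
approval score or by equal score and smaller index (lexicographic tie-breaking with
respect to the fixed linear order on the candidates `Fin m`). -/
def IsAVCommittee (m n k : ℕ) (P : Fin n → Finset (Fin m)) (W : Finset (Fin m)) : Prop :=
  W.card = k ∧ ∀ c ∈ W, ∀ d : Fin m, d ∉ W →
    (avScore m n P d < avScore m n P c ∨ (avScore m n P d = avScore m n P c ∧ c < d))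

/-- Approval Voting with lexicographic tie-breaking: selects the `k` candidates with
highest approval score, breaking ties in favour of lexicographically smaller candidates. -/
noncomputable def AV (m n k : ℕ) (P : Fin n → Finset (Fin m)) : Finset (Fin m) :=
  if h : ∃ W, IsAVCommittee m n k P W then h.choose else ∅

/-- The harmonic number `H r = 1 + 1/2 + ⋯ + 1/r`, with `H 0 = 0`. -/
def harm : ℕ → ℚ
  | 0 => 0
  | r + 1 => harm r + 1 / (r + 1)

/-- The PAV score of committee `W` in profile `P`: `∑ᵢ H(|P i ∩ W|)`. -/
def pavScore (m n : ℕ) (P : Fin n → Finset (Fin m)) (W : Finset (Fin m)) : ℚ :=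
  ∑ i, harm ((P i ∩ W).card)

/-- Encoding used for lexicographic comparison of committees: a committee is
lexicographically earlier iff its encoding is larger. -/
def pavEncode (m : ℕ) (W : Finset (Fin m)) : ℕ :=
  ∑ c ∈ W, 2 ^ (m - 1 - (c : ℕ))

/-- `W` is the PAV winner: a size-`k` committee maximizing the PAV score, and the
lexicographically first among all such maximizers. -/
def IsPAVWinner (m n k : ℕ) (P : Fin n → Finset (Fin m)) (W : Finset (Fin m)) : Prop :=
  W.card = k ∧
  (∀ W' : Finset (Fin m), W'.card = k → pavScore m n P W' ≤ pavScore m n P W) ∧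
  (∀ W' : Finset (Fin m), W'.card = k → pavScore m n P W' = pavScore m n P W →
    pavEncode m W' ≤ pavEncode m W)

/-- Proportional Approval Voting, breaking ties by the lexicographically first optimum. -/
noncomputable def PAV (m n k : ℕ) (P : Fin n → Finset (Fin m)) : Finset (Fin m) :=
  if h : ∃ W, IsPAVWinner m n k P W then h.choose else ∅

/-- The truthful profile `(abc, abc, abc, abd, abd)` with `a,b,c,d = 0,1,2,3`. -/
def P13 : Fin 5 → Finset (Fin 4) := fun i =>
  if (i : ℕ) < 3 then {0, 1, 2} else {0, 1, 3}

/-- The 5-variant profile where voter 5 reports `{d}` instead of `{a,b,d}`. -/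
def P13' : Fin 5 → Finset (Fin 4) := fun i =>
  if (i : ℕ) = 4 then {3} else P13 i

/-- **PAV is not strategyproof.** For `C = {a,b,c,d}`, `k = 3` and `n = 5`: in
`P = (abc, abc, abc, abd, abd)` the unique PAV-score maximizer is `{a,b,c}`, while in
the 5-variant `P'` where voter 5 reports the proper subset `{d}` of her truthful ballot
`{a,b,d}`, the unique PAV-score maximizer is `{a,b,d}`; the new outcome intersected with
voter 5's truthful ballot strictly contains the old one. -/
lemma pav_eq_of_strict (m n k : ℕ) (P : Fin n → Finset (Fin m)) (W0 : Finset (Fin m))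
    (h0 : W0.card = k)
    (h : ∀ W, W.card = k → W ≠ W0 → pavScore m n P W < pavScore m n P W0) :
    PAV m n k P = W0 := by
  have win : IsPAVWinner m n k P W0 := by
    refine ⟨h0, fun W' hc => ?_, fun W' hc he => ?_⟩
    · by_cases e : W' = W0
      · exact le_of_eq (by rw [e])
      · exact (h W' hc e).le
    · by_cases e : W' = W0
      · rw [e]
      · exact absurd he (ne_of_lt (h W' hc e))
  have hex : ∃ W, IsPAVWinner m n k P W := ⟨W0, win⟩
  rw [PAV, dif_pos hex]
  have hw := hex.choose_spec
  by_contra ne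
  exact absurd (hw.2.1 W0 h0) (not_le.mpr (h _ hw.1 ne))

theorem pav_not_strategyproof :
    IVariant P13 P13' (4 : Fin 5) ∧ P13' 4 ⊂ P13 4 ∧
    (∀ W : Finset (Fin 4), W.card = 3 → W ≠ {0, 1, 2} →
      pavScore 4 5 P13 W < pavScore 4 5 P13 {0, 1, 2}) ∧
    (∀ W : Finset (Fin 4), W.card = 3 → W ≠ {0, 1, 3} →
      pavScore 4 5 P13' W < pavScore 4 5 P13' {0, 1, 3}) ∧
    (({0, 1, 2} : Finset (Fin 4)) ∩ P13 4 ⊂ ({0, 1, 3} : Finset (Fin 4)) ∩ P13 4) ∧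
    PAV 4 5 3 P13 ∩ P13 4 ⊂ PAV 4 5 3 P13' ∩ P13 4 := by
  have h1 : ∀ W : Finset (Fin 4), W.card = 3 → W ≠ {0, 1, 2} →
      pavScore 4 5 P13 W < pavScore 4 5 P13 {0, 1, 2} := by
    intro W hc hne
    fin_cases W <;> first
      | exact absurd hc (by decide)
      | exact absurd (by decide) hne
      | (simp (config := {decide := true}) [pavScore, P13, Fin.sum_univ_five, harm]; norm_num)
  have h2 : ∀ W : Finset (Fin 4), W.card = 3 → W ≠ {0, 1, 3} →
      pavScore 4 5 P13' W < pavScore 4 5 P13' {0, 1, 3} := by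
    intro W hc hne
    fin_cases W <;> first
      | exact absurd hc (by decide)
      | exact absurd (by decide) hne
      | (simp (config := {decide := true}) [pavScore, P13', P13, Fin.sum_univ_five, harm]; norm_num)
  have e1 : PAV 4 5 3 P13 = {0, 1, 2} := pav_eq_of_strict 4 5 3 P13 _ (by decide) h1
  have e2 : PAV 4 5 3 P13' = {0, 1, 3} := pav_eq_of_strict 4 5 3 P13' _ (by decide) h2
  have p4 : P13 4 = {0, 1, 3} := by decide
  have p4' : P13' 4 = {3} := by decide
  refine ⟨fun j hj => ?_, ?_, h1, h2, ?_, ?_⟩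
  · fin_cases j
    · decide
    · decide
    · decide
    · decide
    · exact absurd (by decide) hj
  · rw [p4, p4']; decide
  · rw [p4]; decide
  · rw [e1, e2, p4]; decide
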